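/- Theorem 3.2 (infinite case): If the set K of keys is infinite, then the axiom system AX_inf is sound and complete with respect to the open semantics of LLNC: a formula φ is provable in AX_inf if and only if φ is o-valid. -/
import Mathlib


/-- Principal expressions over keys `K`, global names `G`, local names `N`. -/
inductive PExp (K G N : Type*) where
  | key : K → PExp K G N
  | glob : G → PExp K G N
  | loc : N → PExp K G N
  | s : PExp K G N → PExp K G N → PExp K G N

/-- Formulas of LLNC. -/
inductive Fml (K G N : Type*) where
  | bdto : PExp K G N → PExp K G N → Fml K G N
  | cert : K → Fml K G N → Fml K G N
  | not : Fml K G N → Fml K G N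
  | and : Fml K G N → Fml K G N → Fml K G N

/-- A world: an interpretation of global names and an assignment of
certificates to keys, with only finitely many certificates issued. -/
structure World (K G N : Type*) where
  beta : G → Set K
  certs : K → Set (Fml K G N)
  finite_certs : (⋃ k, certs k).Finite

variable {K G N : Type*}

/-- The interpretation of a principal expression relative to a world, a
local name assignment, and a key. -/
def interp (w : World K G N) (l : K → N → Set K) : PExp K G N → K → Set K
  | .key k', _ => {k'}
  | .glob g, _ => w.beta g
  | .loc n, k => l k n
  | .s p q, k => ⋃ k' ∈ interp w l p k, interp w l q k'

/-- Satisfaction of a formula at a world, local name assignment, and key. -/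
def Sat (w : World K G N) (l : K → N → Set K) (k : K) : Fml K G N → Prop
  | .bdto p q => interp w l q k ⊆ interp w l p k
  | .cert k' φ => φ ∈ w.certs k'
  | .not φ => ¬ Sat w l k φ
  | .and φ ψ => Sat w l k φ ∧ Sat w l k ψ

/-- A local name assignment is consistent with a world if every issued
binding certificate holds at the issuer. -/
def Consistent (w : World K G N) (l : K → N → Set K) : Prop :=
  ∀ (k : K) (n : N) (p : PExp K G N),
    Fml.bdto (.loc n) p ∈ w.certs k → Sat w l k (.bdto (.loc n) p)

/-- `lw` is the (unique) minimal local name assignment consistent with `w`. -/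
def IsMinConsistent (w : World K G N) (lw : K → N → Set K) : Prop :=
  Consistent w lw ∧ ∀ l, Consistent w l → ∀ (k : K) (n : N), lw k n ⊆ l k n

/-- Open-semantics satisfaction: satisfaction with a consistent assignment. -/
def OSat (w : World K G N) (l : K → N → Set K) (k : K) (φ : Fml K G N) : Prop :=
  Sat w l k φ ∧ Consistent w l

/-- `φ` is o-satisfiable. -/
def OSatisfiable (φ : Fml K G N) : Prop :=
  ∃ (w : World K G N) (l : K → N → Set K) (k : K), OSat w l k φ

/-- `φ` is o-valid: no triple satisfies `¬φ` under the open semantics. -/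
def OValid (φ : Fml K G N) : Prop :=
  ¬ ∃ (w : World K G N) (l : K → N → Set K) (k : K), OSat w l k (.not φ)

/-- `φ` is c-satisfiable: some world and key satisfy it under the minimal
consistent local name assignment of the world. -/
def CSatisfiable (φ : Fml K G N) : Prop :=
  ∃ (w : World K G N) (k : K) (lw : K → N → Set K), IsMinConsistent w lw ∧ Sat w lw k φ

/-- `φ` is c-valid: every world and key satisfy it under the minimal
consistent local name assignment of the world. -/
def CValid (φ : Fml K G N) : Prop :=
  ∀ (w : World K G N) (k : K) (lw : K → N → Set K), IsMinConsistent w lw → Sat w lw k φ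

/-- Material implication, as a classical abbreviation. -/
def Fml.imp (φ ψ : Fml K G N) : Fml K G N := .not (.and φ (.not ψ))

/-- Disjunction, as a classical abbreviation. -/
def Fml.or (φ ψ : Fml K G N) : Fml K G N := .not (.and (.not φ) (.not ψ))

/-- Biconditional, as a classical abbreviation. -/
def Fml.iff (φ ψ : Fml K G N) : Fml K G N := .and (φ.imp ψ) (ψ.imp φ)

/-- Boolean evaluation of a formula treating `▷`- and `cert`-formulas as atoms. -/
def evalB (v : Fml K G N → Bool) : Fml K G N → Bool
  | .not φ => !(evalB v φ)
  | .and φ ψ => evalB v φ && evalB v ψ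
  | φ => v φ

/-- `φ` is an instance of a propositional tautology. -/
def Tautology (φ : Fml K G N) : Prop := ∀ v : Fml K G N → Bool, evalB v φ = true

/-- Global identifiers: keys and global names. -/
def IsGlobalId : PExp K G N → Prop
  | .key _ => True
  | .glob _ => True
  | _ => False

/-- The axiom system `AX_inf`. -/
inductive PrvInf : Fml K G N → Prop
  | taut {φ : Fml K G N} : Tautology φ → PrvInf φ
  | refl (p : PExp K G N) : PrvInf (.bdto p p)
  | trans (p q r : PExp K G N) :
      PrvInf ((Fml.bdto p q).imp ((Fml.bdto q r).imp (.bdto p r)))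
  | leftMono (p q r : PExp K G N) :
      PrvInf ((Fml.bdto p q).imp (.bdto (p.s r) (q.s r)))
  | assoc₁ (p q r : PExp K G N) : PrvInf (.bdto ((p.s q).s r) (p.s (q.s r)))
  | assoc₂ (p q r : PExp K G N) : PrvInf (.bdto (p.s (q.s r)) ((p.s q).s r))
  | keyGlob (k : K) (g : PExp K G N) (hg : IsGlobalId g) :
      PrvInf (.bdto ((PExp.key k).s g) g)
  | glob (p : PExp K G N) (k : K) (g : PExp K G N) (hg : IsGlobalId g) :
      PrvInf ((Fml.bdto (p.s (.key k)) (.key k)).imp (.bdto (p.s g) g))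
  | convGlob (p g : PExp K G N) (hg : IsGlobalId g) : PrvInf (.bdto g (p.s g))
  | keyLink (k : K) (n : N) (r : PExp K G N) :
      PrvInf ((Fml.cert k (.bdto (.loc n) r)).imp
        (.bdto ((PExp.key k).s (.loc n)) ((PExp.key k).s r)))
  | nonempA (p : PExp K G N) (k₁ k : K) :
      PrvInf ((Fml.bdto p (.key k₁)).imp (.bdto (p.s (.key k)) (.key k)))
  | nonempB (p q : PExp K G N) (k : K) :
      PrvInf ((Fml.not (.bdto p q)).imp (.bdto (q.s (.key k)) (.key k)))
  | nonempC (p q : PExp K G N) (k₁ k : K) :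
      PrvInf ((Fml.bdto (p.s q) (.key k₁)).imp (.bdto (p.s (.key k)) (.key k)))
  | nonempD (p : PExp K G N) (k k' : K) :
      PrvInf ((Fml.and (.bdto (p.s (.key k)) (.key k)) (.bdto (.key k') p)).imp
        (.bdto p (.key k')))
  | keyDist (k₁ k₂ : K) (hne : k₁ ≠ k₂) : PrvInf (.not (.bdto (.key k₁) (.key k₂)))
  | mp {φ ψ : Fml K G N} : PrvInf φ → PrvInf (φ.imp ψ) → PrvInf ψ
namespace LLNC
open Classical

section Sound
variable {K G N : Type*}

lemma evalB_not (v : Fml K G N → Bool) (φ : Fml K G N) : evalB v (.not φ) = !(evalB v φ) := rfl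
lemma evalB_and (v : Fml K G N → Bool) (φ ψ : Fml K G N) :
    evalB v (.and φ ψ) = (evalB v φ && evalB v ψ) := rfl
lemma evalB_bdto (v : Fml K G N → Bool) (p q : PExp K G N) :
    evalB v (.bdto p q) = v (.bdto p q) := rfl
lemma evalB_cert (v : Fml K G N → Bool) (k : K) (φ : Fml K G N) :
    evalB v (.cert k φ) = v (.cert k φ) := rfl
lemma evalB_imp (v : Fml K G N → Bool) (φ ψ : Fml K G N) :
    evalB v (φ.imp ψ) = (!(evalB v φ && !(evalB v ψ))) := rfl

lemma sat_not {w : World K G N} {l k} {a : Fml K G N} : Sat w l k (.not a) ↔ ¬ Sat w l k a := Iff.rfl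
lemma sat_and {w : World K G N} {l k} {a b : Fml K G N} :
    Sat w l k (.and a b) ↔ (Sat w l k a ∧ Sat w l k b) := Iff.rfl
lemma sat_bdto {w : World K G N} {l k} {p q : PExp K G N} :
    Sat w l k (.bdto p q) ↔ interp w l q k ⊆ interp w l p k := Iff.rfl
lemma sat_imp {w : World K G N} {l k} {a b : Fml K G N} :
    Sat w l k (a.imp b) ↔ (Sat w l k a → Sat w l k b) := by
  show ¬ (Sat w l k a ∧ ¬ Sat w l k b) ↔ _
  tauto

lemma evalB_sat (w : World K G N) (l : K → N → Set K) (k : K) :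
    ∀ ψ : Fml K G N, (evalB (fun a => decide (Sat w l k a)) ψ = true) ↔ Sat w l k ψ := by
  intro ψ
  induction ψ with
  | bdto p q => simpa [evalB_bdto] using decide_eq_true_iff _
  | cert k' a => simpa [evalB_cert] using decide_eq_true_iff _
  | not a ih => simp [evalB_not, sat_not, ← ih]
  | and a b iha ihb => simp [evalB_and, sat_and, iha, ihb]

lemma interp_s (w : World K G N) (l : K → N → Set K) (p q : PExp K G N) (k : K) :
    interp w l (p.s q) k = ⋃ k' ∈ interp w l p k, interp w l q k' := rfl

lemma mem_interp_s {w : World K G N} {l : K → N → Set K} {p q : PExp K G N} {k z : K} :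
    z ∈ interp w l (p.s q) k ↔ ∃ y ∈ interp w l p k, z ∈ interp w l q y := by
  rw [interp_s]; simp

lemma global_interp {g : PExp K G N} (hg : IsGlobalId g) (w : World K G N) (l) (x y : K) :
    interp w l g x = interp w l g y := by
  cases g with
  | key k => rfl
  | glob g => rfl
  | loc n => exact absurd hg (by simp [IsGlobalId])
  | s p q => exact absurd hg (by simp [IsGlobalId])

theorem soundness {φ : Fml K G N} (h : PrvInf φ) :
    ∀ (w : World K G N) (l : K → N → Set K) (k : K), Consistent w l → Sat w l k φ := by
  induction h with
  | @taut ψ ht =>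
    intro w l k _
    exact (evalB_sat w l k ψ).mp (ht _)
  | refl p => intro w l k _; exact fun z hz => hz
  | trans p q r =>
    intro w l k _
    rw [sat_imp, sat_imp]
    exact fun h1 h2 => Set.Subset.trans h2 h1
  | leftMono p q r =>
    intro w l k _
    rw [sat_imp]
    intro h1
    have h1' : interp w l q k ⊆ interp w l p k := h1
    show interp w l (q.s r) k ⊆ interp w l (p.s r) k
    intro z hz
    rcases mem_interp_s.mp hz with ⟨y, hy, hz⟩
    exact mem_interp_s.mpr ⟨y, h1' hy, hz⟩
  | assoc₁ p q r =>
    intro w l k _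
    show interp w l (p.s (q.s r)) k ⊆ interp w l ((p.s q).s r) k
    intro z hz
    rcases mem_interp_s.mp hz with ⟨x, hx, hz⟩
    rcases mem_interp_s.mp hz with ⟨y, hy, hz⟩
    exact mem_interp_s.mpr ⟨y, mem_interp_s.mpr ⟨x, hx, hy⟩, hz⟩
  | assoc₂ p q r =>
    intro w l k _
    show interp w l ((p.s q).s r) k ⊆ interp w l (p.s (q.s r)) k
    intro z hz
    rcases mem_interp_s.mp hz with ⟨y, hy, hz⟩
    rcases mem_interp_s.mp hy with ⟨x, hx, hy⟩
    exact mem_interp_s.mpr ⟨x, hx, mem_interp_s.mpr ⟨y, hy, hz⟩⟩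
  | keyGlob k' g hg =>
    intro w l k _
    show interp w l g k ⊆ interp w l ((PExp.key k').s g) k
    intro z hz
    exact mem_interp_s.mpr ⟨k', rfl, (global_interp hg w l k k' ▸ hz)⟩
  | glob p k' g hg =>
    intro w l k _
    rw [sat_imp]
    intro h1
    have h1' : interp w l (.key k') k ⊆ interp w l (p.s (.key k')) k := h1
    show interp w l g k ⊆ interp w l (p.s g) k
    intro z hz
    have hk : k' ∈ interp w l (p.s (.key k')) k := h1' rfl
    rcases mem_interp_s.mp hk with ⟨x, hx, _⟩
    exact mem_interp_s.mpr ⟨x, hx, (global_interp hg w l k x ▸ hz)⟩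
  | convGlob p g hg =>
    intro w l k _
    show interp w l (p.s g) k ⊆ interp w l g k
    intro z hz
    rcases mem_interp_s.mp hz with ⟨x, _, hz⟩
    exact (global_interp hg w l x k ▸ hz)
  | keyLink k' n r =>
    intro w l k hc
    rw [sat_imp]
    intro h1
    have h2 : interp w l r k' ⊆ l k' n := hc k' n r h1
    show interp w l ((PExp.key k').s r) k ⊆ interp w l ((PExp.key k').s (.loc n)) k
    intro z hz
    rcases mem_interp_s.mp hz with ⟨x, hx, hz2⟩
    have hx' : x = k' := hx
    rw [hx'] at hz2
    exact mem_interp_s.mpr ⟨k', rfl, h2 hz2⟩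
  | nonempA p k₁ k' =>
    intro w l k _
    rw [sat_imp]
    intro h1
    have h1 : interp w l (.key k₁) k ⊆ interp w l p k := h1
    show interp w l (.key k') k ⊆ interp w l (p.s (.key k')) k
    intro z hz
    have hz' : z = k' := hz
    subst hz'
    exact mem_interp_s.mpr ⟨k₁, h1 rfl, rfl⟩
  | nonempB p q k' =>
    intro w l k _
    rw [sat_imp]
    intro h1
    have h1' : ¬ interp w l q k ⊆ interp w l p k := h1
    show interp w l (.key k') k ⊆ interp w l (q.s (.key k')) k
    intro z hz
    have : ∃ y, y ∈ interp w l q k := by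
      by_contra hno
      push_neg at hno
      exact h1' (fun y hy => absurd hy (hno y))
    rcases this with ⟨y, hy⟩
    have hz' : z = k' := hz
    subst hz'
    exact mem_interp_s.mpr ⟨y, hy, rfl⟩
  | nonempC p q k₁ k' =>
    intro w l k _
    rw [sat_imp]
    intro h1
    have h1 : interp w l (.key k₁) k ⊆ interp w l (p.s q) k := h1
    show interp w l (.key k') k ⊆ interp w l (p.s (.key k')) k
    intro z hz
    rcases mem_interp_s.mp (h1 rfl) with ⟨y, hy, _⟩
    have hz' : z = k' := hz
    subst hz'
    exact mem_interp_s.mpr ⟨y, hy, rfl⟩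
  | nonempD p kA kB =>
    intro w l k _
    rw [sat_imp]
    intro h1
    rcases (sat_and.mp h1) with ⟨ha, hb⟩
    have ha : interp w l (.key kA) k ⊆ interp w l (p.s (.key kA)) k := ha
    have hb : interp w l p k ⊆ interp w l (.key kB) k := hb
    show interp w l (.key kB) k ⊆ interp w l p k
    rcases mem_interp_s.mp (ha rfl) with ⟨y, hy, _⟩
    have hyB : y = kB := hb hy
    intro z hz
    have hz' : z = kB := hz
    rw [hz', ← hyB]
    exact hy
  | keyDist k₁ k₂ hne =>
    intro w l k _
    rw [sat_not]
    intro hsub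
    have hsub : interp w l (.key k₂) k ⊆ interp w l (.key k₁) k := hsub
    exact hne (hsub rfl).symm
  | @mp a b _ _ ih1 ih2 =>
    intro w l k hc
    exact (sat_imp.mp (ih2 w l k hc)) (ih1 w l k hc)

end Sound
end LLNC
namespace LLNC
section PropLayer
variable {K G N : Type*}

/-- tactic-friendly tautology discharge -/
lemma taut_of_eval {φ : Fml K G N} (h : ∀ v : Fml K G N → Bool, evalB v φ = true) :
    PrvInf φ := PrvInf.taut h

lemma taut_K (a x : Fml K G N) : PrvInf (a.imp (x.imp a)) := by
  apply taut_of_eval; intro v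
  simp only [Fml.imp, evalB_not, evalB_and]
  cases evalB v a <;> cases evalB v x <;> rfl

lemma taut_S (x a b c : Fml K G N) :
    PrvInf ((a.imp (b.imp c)).imp ((x.imp a).imp ((x.imp b).imp (x.imp c)))) := by
  apply taut_of_eval; intro v
  simp only [Fml.imp, evalB_not, evalB_and]
  cases evalB v a <;> cases evalB v b <;> cases evalB v c <;> cases evalB v x <;> rfl

lemma taut_dup (a b : Fml K G N) : PrvInf ((a.imp (a.imp b)).imp (a.imp b)) := by
  apply taut_of_eval; intro v
  simp only [Fml.imp, evalB_not, evalB_and]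
  cases evalB v a <;> cases evalB v b <;> rfl

lemma taut_id (a : Fml K G N) : PrvInf (a.imp a) := by
  apply taut_of_eval; intro v
  simp only [Fml.imp, evalB_not, evalB_and]
  cases evalB v a <;> rfl

lemma taut_imp_imp (a b x : Fml K G N) :
    PrvInf ((a.imp b).imp ((x.imp a).imp (x.imp b))) := by
  apply taut_of_eval; intro v
  simp only [Fml.imp, evalB_not, evalB_and]
  cases evalB v a <;> cases evalB v b <;> cases evalB v x <;> rfl

lemma taut_cases (a c : Fml K G N) :
    PrvInf ((a.imp c).imp (((Fml.not a).imp c).imp c)) := by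
  apply taut_of_eval; intro v
  simp only [Fml.imp, evalB_not, evalB_and]
  cases evalB v a <;> cases evalB v c <;> rfl

lemma taut_absurd (a b : Fml K G N) :
    PrvInf (a.imp ((Fml.not a).imp b)) := by
  apply taut_of_eval; intro v
  simp only [Fml.imp, evalB_not, evalB_and]
  cases evalB v a <;> cases evalB v b <;> rfl

lemma taut_botE (a b : Fml K G N) : PrvInf ((Fml.and b (.not b)).imp a) := by
  apply taut_of_eval; intro v
  simp only [Fml.imp, evalB_not, evalB_and]
  cases evalB v a <;> cases evalB v b <;> rfl

lemma taut_notbot_of (a b : Fml K G N) :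
    PrvInf (((Fml.not a).imp (Fml.and b (.not b))).imp a) := by
  apply taut_of_eval; intro v
  simp only [Fml.imp, evalB_not, evalB_and]
  cases evalB v a <;> cases evalB v b <;> rfl

lemma taut_and_intro (a b : Fml K G N) : PrvInf (a.imp (b.imp (.and a b))) := by
  apply taut_of_eval; intro v
  simp only [Fml.imp, evalB_not, evalB_and]
  cases evalB v a <;> cases evalB v b <;> rfl

/-- Derivability from a finite list of hypotheses. -/
def Der (L : List (Fml K G N)) (ψ : Fml K G N) : Prop := PrvInf (L.foldr Fml.imp ψ)

lemma der_nil {ψ : Fml K G N} : Der [] ψ ↔ PrvInf ψ := Iff.rfl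

lemma der_of_prv {L : List (Fml K G N)} {ψ : Fml K G N} (h : PrvInf ψ) : Der L ψ := by
  induction L with
  | nil => exact h
  | cons x L ih => exact PrvInf.mp ih (taut_K _ _)

lemma taut_S2 (p q r x : Fml K G N) :
    PrvInf ((p.imp (q.imp r)).imp ((x.imp p).imp ((x.imp q).imp (x.imp r)))) := by
  apply taut_of_eval; intro v
  simp only [Fml.imp, evalB_not, evalB_and]
  cases evalB v p <;> cases evalB v q <;> cases evalB v r <;> cases evalB v x <;> rfl

lemma chain_mp (L : List (Fml K G N)) (a b : Fml K G N) :
    PrvInf ((L.foldr Fml.imp (a.imp b)).imp ((L.foldr Fml.imp a).imp (L.foldr Fml.imp b))) := by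
  induction L with
  | nil => exact taut_id _
  | cons x L ih => exact PrvInf.mp ih (taut_S2 _ _ _ x)

lemma der_mp {L : List (Fml K G N)} {a b : Fml K G N} (h1 : Der L (a.imp b)) (h2 : Der L a) :
    Der L b := PrvInf.mp h2 (PrvInf.mp h1 (chain_mp L a b))

lemma prv_imp_self_chain (ψ : Fml K G N) (L : List (Fml K G N)) :
    PrvInf (ψ.imp (L.foldr Fml.imp ψ)) := by
  induction L with
  | nil => exact taut_id ψ
  | cons y L ih => exact PrvInf.mp ih (PrvInf.mp (taut_K _ y) (taut_imp_imp _ _ ψ))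

lemma der_mem {L : List (Fml K G N)} {ψ : Fml K G N} (h : ψ ∈ L) : Der L ψ := by
  induction L with
  | nil => cases h
  | cons x L ih =>
    rcases List.mem_cons.mp h with h | h
    · subst h
      exact prv_imp_self_chain ψ L
    · exact PrvInf.mp (ih h) (taut_K _ _)

lemma der_weak {L : List (Fml K G N)} {x ψ : Fml K G N} (h : Der L ψ) : Der (x :: L) ψ :=
  PrvInf.mp h (taut_K _ _)

end PropLayer
end LLNC
namespace LLNC
open Classical
section Complete
variable {K G N : Type*}

/-- A canonical contradiction. -/
def botF (φ : Fml K G N) : Fml K G N := .and φ (.not φ)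

def ConsL (φ : Fml K G N) (L : List (Fml K G N)) : Prop := ¬ Der L (botF φ)

lemma consl_absurd {φ : Fml K G N} {L} (hc : ConsL φ L) {a : Fml K G N}
    (h1 : Der L a) (h2 : Der L (.not a)) : False :=
  hc (der_mp (der_mp (der_of_prv (taut_absurd a (botF φ))) h1) h2)

lemma consl_split {φ : Fml K G N} {L} (hc : ConsL φ L) (ψ : Fml K G N) :
    ConsL φ (ψ :: L) ∨ ConsL φ (ψ.not :: L) := by
  by_contra h
  push_neg at h
  obtain ⟨h1, h2⟩ := h
  rw [ConsL, not_not] at h1 h2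
  exact hc (PrvInf.mp h2 (PrvInf.mp h1 (taut_cases ψ (L.foldr Fml.imp (botF φ)))))

noncomputable def extendL (φ : Fml K G N) : List (Fml K G N) → List (Fml K G N) → List (Fml K G N)
  | L, [] => L
  | L, ψ :: rest => extendL φ (if ConsL φ (ψ :: L) then ψ :: L else ψ.not :: L) rest

lemma extendL_sub (φ : Fml K G N) : ∀ (ss L : List (Fml K G N)), ∀ a ∈ L, a ∈ extendL φ L ss := by
  intro ss
  induction ss with
  | nil => intro L a ha; exact ha
  | cons ψ rest ih =>
    intro L a ha
    show a ∈ extendL φ (if ConsL φ (ψ :: L) then ψ :: L else ψ.not :: L) rest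
    by_cases h : ConsL φ (ψ :: L)
    · rw [if_pos h]; exact ih _ a (List.mem_cons_of_mem _ ha)
    · rw [if_neg h]; exact ih _ a (List.mem_cons_of_mem _ ha)

lemma extendL_cons (φ : Fml K G N) : ∀ (ss L : List (Fml K G N)),
    ConsL φ L → ConsL φ (extendL φ L ss) := by
  intro ss
  induction ss with
  | nil => intro L h; exact h
  | cons ψ rest ih =>
    intro L h
    show ConsL φ (extendL φ (if ConsL φ (ψ :: L) then ψ :: L else ψ.not :: L) rest)
    by_cases hc : ConsL φ (ψ :: L)
    · rw [if_pos hc]; exact ih _ hc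
    · rw [if_neg hc]
      rcases consl_split h ψ with h' | h'
      · exact absurd h' hc
      · exact ih _ h'

lemma extendL_decides (φ : Fml K G N) : ∀ (ss L : List (Fml K G N)), ∀ ψ ∈ ss,
    ψ ∈ extendL φ L ss ∨ ψ.not ∈ extendL φ L ss := by
  intro ss
  induction ss with
  | nil => intro L ψ h; cases h
  | cons χ rest ih =>
    intro L ψ h
    rcases List.mem_cons.mp h with h | h
    · subst h
      show ψ ∈ extendL φ (if ConsL φ (ψ :: L) then ψ :: L else ψ.not :: L) rest ∨
        ψ.not ∈ extendL φ (if ConsL φ (ψ :: L) then ψ :: L else ψ.not :: L) rest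
      by_cases hc : ConsL φ (ψ :: L)
      · rw [if_pos hc]; exact Or.inl (extendL_sub φ rest _ ψ (by simp))
      · rw [if_neg hc]; exact Or.inr (extendL_sub φ rest _ ψ.not (by simp))
    · exact ih _ ψ h

/-- List of "relevant" subformulas (treating `cert` formulas as atoms). -/
def subsF : Fml K G N → List (Fml K G N)
  | .not a => .not a :: subsF a
  | .and a b => .and a b :: (subsF a ++ subsF b)
  | x => [x]

lemma self_mem_subsF (φ : Fml K G N) : φ ∈ subsF φ := by
  cases φ <;> simp [subsF]

/-- symbol lists -/
def pKeys : PExp K G N → List K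
  | .key k => [k]
  | .glob _ => []
  | .loc _ => []
  | .s p q => pKeys p ++ pKeys q

def pGlobs : PExp K G N → List G
  | .key _ => []
  | .glob g => [g]
  | .loc _ => []
  | .s p q => pGlobs p ++ pGlobs q

def pLocs : PExp K G N → List N
  | .key _ => []
  | .glob _ => []
  | .loc n => [n]
  | .s p q => pLocs p ++ pLocs q

def fKeys : Fml K G N → List K
  | .bdto p q => pKeys p ++ pKeys q
  | .cert k ψ => k :: fKeys ψ
  | .not ψ => fKeys ψ
  | .and a b => fKeys a ++ fKeys b

def fGlobs : Fml K G N → List G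
  | .bdto p q => pGlobs p ++ pGlobs q
  | .cert _ ψ => fGlobs ψ
  | .not ψ => fGlobs ψ
  | .and a b => fGlobs a ++ fGlobs b

def fLocs : Fml K G N → List N
  | .bdto p q => pLocs p ++ pLocs q
  | .cert _ ψ => fLocs ψ
  | .not ψ => fLocs ψ
  | .and a b => fLocs a ++ fLocs b

def LKeys (Δ : List (Fml K G N)) : List K := Δ.foldr (fun ψ acc => fKeys ψ ++ acc) []
def LGlobs (Δ : List (Fml K G N)) : List G := Δ.foldr (fun ψ acc => fGlobs ψ ++ acc) []
def LLocs (Δ : List (Fml K G N)) : List N := Δ.foldr (fun ψ acc => fLocs ψ ++ acc) []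

lemma mem_LKeys {Δ : List (Fml K G N)} {ψ : Fml K G N} (h : ψ ∈ Δ) {k : K}
    (hk : k ∈ fKeys ψ) : k ∈ LKeys Δ := by
  induction Δ with
  | nil => cases h
  | cons χ Δ ih =>
    rcases List.mem_cons.mp h with h | h
    · subst h; exact List.mem_append.mpr (Or.inl hk)
    · exact List.mem_append.mpr (Or.inr (ih h))

lemma mem_LGlobs {Δ : List (Fml K G N)} {ψ : Fml K G N} (h : ψ ∈ Δ) {g : G}
    (hg : g ∈ fGlobs ψ) : g ∈ LGlobs Δ := by
  induction Δ with
  | nil => cases h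
  | cons χ Δ ih =>
    rcases List.mem_cons.mp h with h | h
    · subst h; exact List.mem_append.mpr (Or.inl hg)
    · exact List.mem_append.mpr (Or.inr (ih h))

lemma mem_LLocs {Δ : List (Fml K G N)} {ψ : Fml K G N} (h : ψ ∈ Δ) {n : N}
    (hn : n ∈ fLocs ψ) : n ∈ LLocs Δ := by
  induction Δ with
  | nil => cases h
  | cons χ Δ ih =>
    rcases List.mem_cons.mp h with h | h
    · subst h; exact List.mem_append.mpr (Or.inl hn)
    · exact List.mem_append.mpr (Or.inr (ih h))

/-- vocabulary of a principal expression is within Δ's symbols -/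
def PV (Δ : List (Fml K G N)) (p : PExp K G N) : Prop :=
  (∀ k ∈ pKeys p, k ∈ LKeys Δ) ∧ (∀ g ∈ pGlobs p, g ∈ LGlobs Δ) ∧ (∀ n ∈ pLocs p, n ∈ LLocs Δ)

lemma PV_s {Δ : List (Fml K G N)} {p q : PExp K G N} :
    PV Δ (p.s q) ↔ PV Δ p ∧ PV Δ q := by
  simp only [PV, pKeys, pGlobs, pLocs, List.mem_append]
  constructor
  · rintro ⟨h1, h2, h3⟩
    exact ⟨⟨fun k hk => h1 k (Or.inl hk), fun g hg => h2 g (Or.inl hg), fun n hn => h3 n (Or.inl hn)⟩,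
      ⟨fun k hk => h1 k (Or.inr hk), fun g hg => h2 g (Or.inr hg), fun n hn => h3 n (Or.inr hn)⟩⟩
  · rintro ⟨⟨h1, h2, h3⟩, ⟨h4, h5, h6⟩⟩
    refine ⟨fun k hk => ?_, fun g hg => ?_, fun n hn => ?_⟩
    · rcases hk with hk | hk; exacts [h1 k hk, h4 k hk]
    · rcases hg with hg | hg; exacts [h2 g hg, h5 g hg]
    · rcases hn with hn | hn; exacts [h3 n hn, h6 n hn]

lemma PV_key {Δ : List (Fml K G N)} {k : K} (hk : k ∈ LKeys Δ) : PV Δ (.key k) := by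
  refine ⟨?_, ?_, ?_⟩ <;> intro a ha <;> simp [pKeys, pGlobs, pLocs] at ha
  · subst ha; exact hk

/-- a classical index function -/
noncomputable def idxL {α : Type*} : List α → α → ℕ
  | [], _ => 0
  | a :: L, k => if k = a then 0 else idxL L k + 1

lemma idxL_inj {α : Type*} : ∀ {L : List α} {a b : α}, a ∈ L → b ∈ L →
    idxL L a = idxL L b → a = b := by
  intro L
  induction L with
  | nil => intro a b ha; cases ha
  | cons x L ih =>
    intro a b ha hb h
    by_cases h1 : a = x <;> by_cases h2 : b = x
    · rw [h1, h2]
    · rw [idxL, idxL, if_pos h1, if_neg h2] at h; omega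
    · rw [idxL, idxL, if_neg h1, if_pos h2] at h; omega
    · rw [idxL, idxL, if_neg h1, if_neg h2] at h
      have ha' : a ∈ L := by
        rcases List.mem_cons.mp ha with h' | h'
        · exact absurd h' h1
        · exact h'
      have hb' : b ∈ L := by
        rcases List.mem_cons.mp hb with h' | h'
        · exact absurd h' h2
        · exact h'
      have h' : idxL L a = idxL L b := by omega
      exact ih ha' hb' h'

/-- encoding of expressions over the finite vocabulary into ℕ -/
noncomputable def encP (KS : List K) (GS : List G) (NS : List N) : PExp K G N → ℕ
  | .key k => Nat.pair 0 (idxL KS k)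
  | .glob g => Nat.pair 1 (idxL GS g)
  | .loc n => Nat.pair 2 (idxL NS n)
  | .s p q => Nat.pair 3 (Nat.pair (encP KS GS NS p) (encP KS GS NS q))

lemma encP_inj {Δ : List (Fml K G N)} : ∀ {p q : PExp K G N}, PV Δ p → PV Δ q →
    encP (LKeys Δ) (LGlobs Δ) (LLocs Δ) p = encP (LKeys Δ) (LGlobs Δ) (LLocs Δ) q → p = q := by
  intro p
  induction p with
  | key k =>
    intro q hp hq h
    cases q <;> simp only [encP, Nat.pair_eq_pair] at h
    · obtain ⟨-, h⟩ := h
      rw [idxL_inj (hp.1 k (by simp [pKeys])) (hq.1 _ (by simp [pKeys])) h]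
    · omega
    · omega
    · omega
  | glob g =>
    intro q hp hq h
    cases q <;> simp only [encP, Nat.pair_eq_pair] at h
    · omega
    · obtain ⟨-, h⟩ := h
      rw [idxL_inj (hp.2.1 g (by simp [pGlobs])) (hq.2.1 _ (by simp [pGlobs])) h]
    · omega
    · omega
  | loc n =>
    intro q hp hq h
    cases q <;> simp only [encP, Nat.pair_eq_pair] at h
    · omega
    · omega
    · obtain ⟨-, h⟩ := h
      rw [idxL_inj (hp.2.2 n (by simp [pLocs])) (hq.2.2 _ (by simp [pLocs])) h]
    · omega
  | s p1 p2 ih1 ih2 =>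
    intro q hp hq h
    cases q <;> simp only [encP, Nat.pair_eq_pair] at h
    · omega
    · omega
    · omega
    · obtain ⟨-, h1, h2⟩ := h
      obtain ⟨hp1, hp2⟩ := PV_s.mp hp
      obtain ⟨hq1, hq2⟩ := PV_s.mp hq
      rw [ih1 hp1 hq1 h1, ih2 hp2 hq2 h2]
/-- Embedding of ℕ into fresh keys. -/
noncomputable def embKE [Infinite K] (Δ : List (Fml K G N)) :
    ℕ ↪ ↥({k : K | k ∈ LKeys Δ}ᶜ) :=
  Set.Infinite.natEmbedding _ ((LKeys Δ).finite_toSet.infinite_compl)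

noncomputable def embK [Infinite K] (Δ : List (Fml K G N)) (n : ℕ) : K := (embKE Δ n).1

lemma embK_inj [Infinite K] {Δ : List (Fml K G N)} {m n : ℕ} (h : embK Δ m = embK Δ n) : m = n :=
  (embKE Δ).injective (Subtype.ext h)

lemma embK_not_mem [Infinite K] (Δ : List (Fml K G N)) (n : ℕ) : embK Δ n ∉ LKeys Δ :=
  (embKE Δ n).2

variable [Infinite K]

noncomputable def k0 (Δ : List (Fml K G N)) : K := embK Δ 0

noncomputable def kap (Δ : List (Fml K G N)) (t : PExp K G N) : K :=
  embK Δ (encP (LKeys Δ) (LGlobs Δ) (LLocs Δ) t + 1)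

lemma k0_not_mem (Δ : List (Fml K G N)) : k0 Δ ∉ LKeys Δ := embK_not_mem Δ 0

lemma kap_not_mem (Δ : List (Fml K G N)) (t : PExp K G N) : kap Δ t ∉ LKeys Δ :=
  embK_not_mem Δ _

lemma kap_ne_k0 (Δ : List (Fml K G N)) (t : PExp K G N) : kap Δ t ≠ k0 Δ := by
  intro h
  have := embK_inj h
  omega

lemma kap_inj {Δ : List (Fml K G N)} {s t : PExp K G N} (hs : PV Δ s) (ht : PV Δ t)
    (h : kap Δ s = kap Δ t) : s = t := by
  have h2 := embK_inj h
  exact encP_inj hs ht (by omega)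

/-- nonemptiness of an expression relative to Δ -/
def NE (Δ : List (Fml K G N)) (t : PExp K G N) : Prop :=
  Der Δ (.bdto (t.s (.key (k0 Δ))) (.key (k0 Δ)))

/-- t is provably a subset of a singleton named key -/
def Pinned (Δ : List (Fml K G N)) (t : PExp K G N) : Prop :=
  ∃ k ∈ LKeys Δ, Der Δ (.bdto (.key k) t)

/-- t generates a phantom key -/
def Ph (Δ : List (Fml K G N)) (t : PExp K G N) : Prop :=
  PV Δ t ∧ NE Δ t ∧ ¬ Pinned Δ t

/-- canonical denotation of an (anchored) expression -/
def Den (Δ : List (Fml K G N)) (e : PExp K G N) : Set K :=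
  {x | (x ∈ LKeys Δ ∧ Der Δ (.bdto e (.key x))) ∨
       ∃ t, Ph Δ t ∧ x = kap Δ t ∧ Der Δ (.bdto e t)}

def Good (Δ : List (Fml K G N)) (x : K) : Prop :=
  x = k0 Δ ∨ x ∈ LKeys Δ ∨ ∃ t, Ph Δ t ∧ x = kap Δ t

lemma Den_good {Δ : List (Fml K G N)} {e : PExp K G N} {x : K} (h : x ∈ Den Δ e) :
    Good Δ x := by
  rcases h with ⟨h1, -⟩ | ⟨t, ht, hx, -⟩
  · exact Or.inr (Or.inl h1)
  · exact Or.inr (Or.inr ⟨t, ht, hx⟩)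

/-- anchoring an expression at a key -/
noncomputable def At (Δ : List (Fml K G N)) (x : K) (p : PExp K G N) : PExp K G N :=
  if x = k0 Δ then p
  else if x ∈ LKeys Δ then (PExp.key x).s p
  else if h : ∃ t, Ph Δ t ∧ x = kap Δ t then (h.choose).s p
  else p

lemma At_k0 (Δ : List (Fml K G N)) (p : PExp K G N) : At Δ (k0 Δ) p = p := if_pos rfl

lemma At_mem {Δ : List (Fml K G N)} {k : K} (hk : k ∈ LKeys Δ) (p : PExp K G N) :
    At Δ k p = (PExp.key k).s p := by
  have h1 : k ≠ k0 Δ := fun h => k0_not_mem Δ (h ▸ hk)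
  rw [At, if_neg h1, if_pos hk]

lemma At_kap {Δ : List (Fml K G N)} {t : PExp K G N} (ht : Ph Δ t) (p : PExp K G N) :
    At Δ (kap Δ t) p = t.s p := by
  have h1 : kap Δ t ≠ k0 Δ := kap_ne_k0 Δ t
  have h2 : kap Δ t ∉ LKeys Δ := kap_not_mem Δ t
  have h3 : ∃ s, Ph Δ s ∧ kap Δ t = kap Δ s := ⟨t, ht, rfl⟩
  rw [At, if_neg h1, if_neg h2, dif_pos h3]
  obtain ⟨hph, heq⟩ := h3.choose_spec
  rw [kap_inj hph.1 ht.1 heq.symm]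

/-- the canonical world -/
noncomputable def theW (Δ : List (Fml K G N)) : World K G N where
  beta g := Den Δ (.glob g)
  certs k := {ψ | Fml.cert k ψ ∈ Δ}
  finite_certs := by
    apply Set.Finite.subset (Δ.filterMap (fun f =>
      match f with
      | .cert _ ψ => some ψ
      | _ => none)).finite_toSet
    intro ψ hψ
    simp only [Set.mem_iUnion, Set.mem_setOf_eq] at hψ
    obtain ⟨k, hk⟩ := hψ
    simp only [List.mem_filterMap]
    exact ⟨.cert k ψ, hk, rfl⟩

/-- the canonical local name assignment -/
noncomputable def theL (Δ : List (Fml K G N)) : K → N → Set K :=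
  fun x n => if Good Δ x then Den Δ (At Δ x (.loc n)) else ∅

/- derived rules -/
lemma Dtrans {Δ : List (Fml K G N)} {p q r : PExp K G N}
    (h1 : Der Δ (.bdto p q)) (h2 : Der Δ (.bdto q r)) : Der Δ (.bdto p r) :=
  der_mp (der_mp (der_of_prv (PrvInf.trans p q r)) h1) h2

lemma DleftMono {Δ : List (Fml K G N)} {p q : PExp K G N}
    (h : Der Δ (.bdto p q)) (r : PExp K G N) : Der Δ (.bdto (p.s r) (q.s r)) :=
  der_mp (der_of_prv (PrvInf.leftMono p q r)) h

lemma Dand {Δ : List (Fml K G N)} {a b : Fml K G N}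
    (h1 : Der Δ a) (h2 : Der Δ b) : Der Δ (.and a b) :=
  der_mp (der_mp (der_of_prv (taut_and_intro a b)) h1) h2

lemma Drefl (Δ : List (Fml K G N)) (p : PExp K G N) : Der Δ (.bdto p p) :=
  der_of_prv (PrvInf.refl p)

lemma NE_of_comp {Δ : List (Fml K G N)} {a q : PExp K G N} {k : K}
    (h : Der Δ (.bdto (a.s q) (.key k))) : NE Δ a :=
  der_mp (der_of_prv (PrvInf.nonempC a q k (k0 Δ))) h

lemma NE_any {Δ : List (Fml K G N)} {t : PExp K G N} (h : NE Δ t) (k : K) :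
    Der Δ (.bdto (t.s (.key k)) (.key k)) :=
  der_mp (der_of_prv (PrvInf.nonempC t (.key (k0 Δ)) (k0 Δ) k)) h

lemma NE_of_comp' {Δ : List (Fml K G N)} {a q t : PExp K G N}
    (h : Der Δ (.bdto (a.s q) t)) (ht : NE Δ t) : NE Δ a := by
  have h1 : Der Δ (.bdto ((a.s q).s (.key (k0 Δ))) (t.s (.key (k0 Δ)))) := DleftMono h _
  have h2 : Der Δ (.bdto ((a.s q).s (.key (k0 Δ))) (.key (k0 Δ))) := Dtrans h1 ht
  have h3 : Der Δ (.bdto (a.s (q.s (.key (k0 Δ)))) (.key (k0 Δ))) :=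
    Dtrans (der_of_prv (PrvInf.assoc₂ a q (.key (k0 Δ)))) h2
  exact NE_of_comp h3

lemma Den_mono {Δ : List (Fml K G N)} {a b : PExp K G N}
    (h : Der Δ (.bdto a b)) : Den Δ b ⊆ Den Δ a := by
  intro z hz
  rcases hz with ⟨hzR, hzD⟩ | ⟨t, ht, hx, hzD⟩
  · exact Or.inl ⟨hzR, Dtrans h hzD⟩
  · exact Or.inr ⟨t, ht, hx, Dtrans h hzD⟩

lemma Den_congr {Δ : List (Fml K G N)} {a b : PExp K G N}
    (h1 : Der Δ (.bdto a b)) (h2 : Der Δ (.bdto b a)) : Den Δ a = Den Δ b :=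
  Set.Subset.antisymm (Den_mono h2) (Den_mono h1)

lemma PV_At {Δ : List (Fml K G N)} {x : K} (hx : Good Δ x) {p : PExp K G N}
    (hp : PV Δ p) : PV Δ (At Δ x p) := by
  rcases hx with hx | hx | ⟨t, ht, hx⟩
  · rw [hx, At_k0]; exact hp
  · rw [At_mem hx]; exact PV_s.mpr ⟨PV_key hx, hp⟩
  · rw [hx, At_kap ht]; exact PV_s.mpr ⟨ht.1, hp⟩

/-- At x g is Δ-provably equivalent to g for global identifiers g -/
lemma der_At_global_1 {Δ : List (Fml K G N)} {x : K} (hx : Good Δ x) {g : PExp K G N}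
    (hg : IsGlobalId g) : Der Δ (.bdto (At Δ x g) g) := by
  rcases hx with hx | hx | ⟨t, ht, hx⟩
  · rw [hx, At_k0]; exact Drefl Δ g
  · rw [At_mem hx]; exact der_of_prv (PrvInf.keyGlob x g hg)
  · rw [hx, At_kap ht]
    exact der_mp (der_of_prv (PrvInf.glob t (k0 Δ) g hg)) ht.2.1

lemma der_At_global_2 {Δ : List (Fml K G N)} {x : K} (hx : Good Δ x) {g : PExp K G N}
    (hg : IsGlobalId g) : Der Δ (.bdto g (At Δ x g)) := by
  rcases hx with hx | hx | ⟨t, ht, hx⟩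
  · rw [hx, At_k0]; exact Drefl Δ g
  · rw [At_mem hx]; exact der_of_prv (PrvInf.convGlob (.key x) g hg)
  · rw [hx, At_kap ht]; exact der_of_prv (PrvInf.convGlob t g hg)

lemma der_At_s_1 {Δ : List (Fml K G N)} {x : K} (hx : Good Δ x) (p q : PExp K G N) :
    Der Δ (.bdto (At Δ x (p.s q)) ((At Δ x p).s q)) := by
  rcases hx with hx | hx | ⟨t, ht, hx⟩
  · rw [hx, At_k0, At_k0]; exact Drefl Δ _
  · rw [At_mem hx, At_mem hx]; exact der_of_prv (PrvInf.assoc₂ (.key x) p q)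
  · rw [hx, At_kap ht, At_kap ht]; exact der_of_prv (PrvInf.assoc₂ t p q)

lemma der_At_s_2 {Δ : List (Fml K G N)} {x : K} (hx : Good Δ x) (p q : PExp K G N) :
    Der Δ (.bdto ((At Δ x p).s q) (At Δ x (p.s q))) := by
  rcases hx with hx | hx | ⟨t, ht, hx⟩
  · rw [hx, At_k0, At_k0]; exact Drefl Δ _
  · rw [At_mem hx, At_mem hx]; exact der_of_prv (PrvInf.assoc₁ (.key x) p q)
  · rw [hx, At_kap ht, At_kap ht]; exact der_of_prv (PrvInf.assoc₁ t p q)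

end Complete
end LLNC
namespace LLNC
open Classical
section Main
variable {K G N : Type*} [Infinite K]

theorem char {Δ : List (Fml K G N)} {φ0 : Fml K G N} (hc : ConsL φ0 Δ) :
    ∀ (p : PExp K G N), PV Δ p → ∀ x, Good Δ x →
      interp (theW Δ) (theL Δ) p x = Den Δ (At Δ x p) := by
  intro p
  induction p with
  | key k' =>
    intro hv x hx
    have hk' : k' ∈ LKeys Δ := hv.1 k' (by simp [pKeys])
    have hgid : IsGlobalId (PExp.key k' : PExp K G N) := trivial
    have derA := der_At_global_1 hx hgid
    have derB := der_At_global_2 hx hgid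
    show ({k'} : Set K) = Den Δ (At Δ x (.key k'))
    ext z
    simp only [Set.mem_singleton_iff]
    constructor
    · rintro rfl
      exact Or.inl ⟨hk', derA⟩
    · intro hz
      rcases hz with ⟨hzR, hzD⟩ | ⟨t, ht, hzk, hzD⟩
      · have h2 : Der Δ (.bdto (.key k') (.key z)) := Dtrans derB hzD
        by_contra hne
        exact consl_absurd hc h2 (der_of_prv (PrvInf.keyDist k' z (fun h => hne h.symm)))
      · exact absurd ⟨k', hk', Dtrans derB hzD⟩ ht.2.2
  | glob g =>
    intro hv x hx
    have hgid : IsGlobalId (PExp.glob g : PExp K G N) := trivial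
    show Den Δ (.glob g) = Den Δ (At Δ x (.glob g))
    exact (Den_congr (der_At_global_1 hx hgid) (der_At_global_2 hx hgid)).symm
  | loc n =>
    intro hv x hx
    show theL Δ x n = Den Δ (At Δ x (.loc n))
    rw [theL, if_pos hx]
  | s p q ihp ihq =>
    intro hv x hx
    obtain ⟨hvp, hvq⟩ := PV_s.mp hv
    apply Set.eq_of_subset_of_subset
    · intro z hz
      rcases mem_interp_s.mp hz with ⟨y, hy, hz⟩
      rw [ihp hvp x hx] at hy
      have hgy : Good Δ y := Den_good hy
      rw [ihq hvq y hgy] at hz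
      apply Den_mono (der_At_s_1 hx p q)
      rcases hy with ⟨hyR, hyD⟩ | ⟨t, pht, rfl, hyD⟩
      · rw [At_mem hyR] at hz
        exact Den_mono (DleftMono hyD q) hz
      · rw [At_kap pht] at hz
        exact Den_mono (DleftMono hyD q) hz
    · intro z hz
      have hz' : z ∈ Den Δ ((At Δ x p).s q) := Den_mono (der_At_s_2 hx p q) hz
      have hvA : PV Δ (At Δ x p) := PV_At hx hvp
      have hNE : NE Δ (At Δ x p) := by
        rcases hz' with ⟨-, hzD⟩ | ⟨s, phs, -, hzD⟩
        · exact NE_of_comp hzD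
        · exact NE_of_comp' hzD phs.2.1
      by_cases hpin : Pinned Δ (At Δ x p)
      · obtain ⟨k'', hkR, hkD⟩ := hpin
        have hAk : Der Δ (.bdto (At Δ x p) (.key k'')) :=
          der_mp (der_of_prv (PrvInf.nonempD (At Δ x p) (k0 Δ) k'')) (Dand hNE hkD)
        apply mem_interp_s.mpr
        refine ⟨k'', ?_, ?_⟩
        · rw [ihp hvp x hx]
          exact Or.inl ⟨hkR, hAk⟩
        · rw [ihq hvq k'' (Or.inr (Or.inl hkR)), At_mem hkR]
          exact Den_mono (DleftMono hkD q) hz'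
      · have phA : Ph Δ (At Δ x p) := ⟨hvA, hNE, hpin⟩
        apply mem_interp_s.mpr
        refine ⟨kap Δ (At Δ x p), ?_, ?_⟩
        · rw [ihp hvp x hx]
          exact Or.inr ⟨At Δ x p, phA, rfl, Drefl Δ _⟩
        · rw [ihq hvq (kap Δ (At Δ x p)) (Or.inr (Or.inr ⟨At Δ x p, phA, rfl⟩)), At_kap phA]
          exact hz'

lemma good_k0 (Δ : List (Fml K G N)) : Good Δ (k0 Δ) := Or.inl rfl

lemma PV_bdto {Δ : List (Fml K G N)} {p q : PExp K G N}
    (h : Fml.bdto p q ∈ Δ ∨ Fml.not (.bdto p q) ∈ Δ) : PV Δ p ∧ PV Δ q := by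
  have hK : ∀ k ∈ fKeys (Fml.bdto p q), k ∈ LKeys Δ := by
    rcases h with h | h
    · exact fun k hk => mem_LKeys h hk
    · exact fun k hk => mem_LKeys h hk
  have hG : ∀ g ∈ fGlobs (Fml.bdto p q), g ∈ LGlobs Δ := by
    rcases h with h | h
    · exact fun g hg => mem_LGlobs h hg
    · exact fun g hg => mem_LGlobs h hg
  have hN : ∀ n ∈ fLocs (Fml.bdto p q), n ∈ LLocs Δ := by
    rcases h with h | h
    · exact fun n hn => mem_LLocs h hn
    · exact fun n hn => mem_LLocs h hn
  simp only [fKeys, fGlobs, fLocs, List.mem_append] at hK hG hN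
  exact ⟨⟨fun k hk => hK k (Or.inl hk), fun g hg => hG g (Or.inl hg), fun n hn => hN n (Or.inl hn)⟩,
    ⟨fun k hk => hK k (Or.inr hk), fun g hg => hG g (Or.inr hg), fun n hn => hN n (Or.inr hn)⟩⟩

lemma taut_andl (a b : Fml K G N) : PrvInf ((Fml.and a b).imp a) := by
  apply taut_of_eval; intro v
  simp only [Fml.imp, evalB_not, evalB_and]
  cases evalB v a <;> cases evalB v b <;> rfl

lemma taut_andr (a b : Fml K G N) : PrvInf ((Fml.and a b).imp b) := by
  apply taut_of_eval; intro v
  simp only [Fml.imp, evalB_not, evalB_and]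
  cases evalB v a <;> cases evalB v b <;> rfl

lemma subsF_closed : ∀ {χ ψ : Fml K G N}, ψ ∈ subsF χ → ∀ a ∈ subsF ψ, a ∈ subsF χ := by
  intro χ
  induction χ with
  | bdto p q =>
    intro ψ h
    simp only [subsF, List.mem_singleton] at h
    subst h
    exact fun a ha => ha
  | cert k b ih =>
    intro ψ h
    simp only [subsF, List.mem_singleton] at h
    subst h
    exact fun a ha => ha
  | not b ih =>
    intro ψ h
    rcases List.mem_cons.mp h with h | h
    · subst h; exact fun a ha => ha
    · exact fun a ha => List.mem_cons_of_mem _ (ih h a ha)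
  | and b c ihb ihc =>
    intro ψ h
    rcases List.mem_cons.mp h with h | h
    · subst h; exact fun a ha => ha
    · rcases List.mem_append.mp h with h | h
      · exact fun a ha => List.mem_cons_of_mem _ (List.mem_append.mpr (Or.inl (ihb h a ha)))
      · exact fun a ha => List.mem_cons_of_mem _ (List.mem_append.mpr (Or.inr (ihc h a ha)))

theorem truth {φ0 : Fml K G N} {Δ : List (Fml K G N)} (hc : ConsL φ0 Δ)
    (hdec : ∀ ψ ∈ subsF φ0, ψ ∈ Δ ∨ ψ.not ∈ Δ) :
    ∀ ψ, ψ ∈ subsF φ0 → (ψ ∈ Δ → Sat (theW Δ) (theL Δ) (k0 Δ) ψ) ∧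
      (ψ.not ∈ Δ → ¬ Sat (theW Δ) (theL Δ) (k0 Δ) ψ) := by
  intro ψ
  induction ψ with
  | bdto p q =>
    intro hmem
    constructor
    · intro hin
      obtain ⟨hvp, hvq⟩ := PV_bdto (Or.inl hin)
      show interp (theW Δ) (theL Δ) q (k0 Δ) ⊆ interp (theW Δ) (theL Δ) p (k0 Δ)
      rw [char hc q hvq _ (good_k0 Δ), char hc p hvp _ (good_k0 Δ), At_k0, At_k0]
      exact Den_mono (der_mem hin)
    · intro hin hsat
      obtain ⟨hvp, hvq⟩ := PV_bdto (Or.inr hin)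
      have hsat' : interp (theW Δ) (theL Δ) q (k0 Δ) ⊆ interp (theW Δ) (theL Δ) p (k0 Δ) := hsat
      rw [char hc q hvq _ (good_k0 Δ), char hc p hvp _ (good_k0 Δ), At_k0, At_k0] at hsat'
      have hNEq : NE Δ q := der_mp (der_of_prv (PrvInf.nonempB p q (k0 Δ))) (der_mem hin)
      by_cases hpin : Pinned Δ q
      · obtain ⟨k'', hkR, hkD⟩ := hpin
        have hqk : Der Δ (.bdto q (.key k'')) :=
          der_mp (der_of_prv (PrvInf.nonempD q (k0 Δ) k'')) (Dand hNEq hkD)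
        have hmemq : k'' ∈ Den Δ q := Or.inl ⟨hkR, hqk⟩
        rcases hsat' hmemq with ⟨-, hD⟩ | ⟨t, pht, heq, -⟩
        · exact consl_absurd hc (Dtrans hD hkD) (der_mem hin)
        · exact kap_not_mem Δ t (heq ▸ hkR)
      · have phq : Ph Δ q := ⟨hvq, hNEq, hpin⟩
        have hmemq : kap Δ q ∈ Den Δ q := Or.inr ⟨q, phq, rfl, Drefl Δ q⟩
        rcases hsat' hmemq with ⟨hR, -⟩ | ⟨t, pht, heq, hD⟩
        · exact kap_not_mem Δ q hR
        · have : t = q := kap_inj pht.1 hvq heq.symm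
          subst this
          exact consl_absurd hc hD (der_mem hin)
  | cert k' b ih =>
    intro hmem
    constructor
    · intro hin
      exact hin
    · intro hin hsat
      have hsat' : Fml.cert k' b ∈ Δ := hsat
      exact consl_absurd hc (der_mem hsat') (der_mem hin)
  | not a ih =>
    intro hmem
    have ha : a ∈ subsF φ0 := subsF_closed hmem a (by cases a <;> simp [subsF])
    constructor
    · intro hin
      exact (ih ha).2 hin
    · intro hin hsat
      rcases hdec a ha with h | h
      · exact hsat ((ih ha).1 h)
      · exact consl_absurd hc (der_mem h) (der_mem hin)
  | and a b iha ihb =>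
    intro hmem
    have hsub : ∀ c ∈ subsF (Fml.and a b), c ∈ subsF φ0 := subsF_closed hmem
    have ha : a ∈ subsF φ0 :=
      hsub a (List.mem_cons_of_mem _ (List.mem_append.mpr (Or.inl (self_mem_subsF a))))
    have hb : b ∈ subsF φ0 :=
      hsub b (List.mem_cons_of_mem _ (List.mem_append.mpr (Or.inr (self_mem_subsF b))))
    constructor
    · intro hin
      have hina : a ∈ Δ := by
        rcases hdec a ha with h | h
        · exact h
        · exact (consl_absurd hc
            (der_mp (der_of_prv (taut_andl a b)) (der_mem hin)) (der_mem h)).elim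
      have hinb : b ∈ Δ := by
        rcases hdec b hb with h | h
        · exact h
        · exact (consl_absurd hc
            (der_mp (der_of_prv (taut_andr a b)) (der_mem hin)) (der_mem h)).elim
      exact ⟨(iha ha).1 hina, (ihb hb).1 hinb⟩
    · intro hin hsat
      obtain ⟨hsa, hsb⟩ := hsat
      have hina : a ∈ Δ := by
        rcases hdec a ha with h | h
        · exact h
        · exact absurd hsa ((iha ha).2 h)
      have hinb : b ∈ Δ := by
        rcases hdec b hb with h | h
        · exact h
        · exact absurd hsb ((ihb hb).2 h)
      exact consl_absurd hc (Dand (der_mem hina) (der_mem hinb)) (der_mem hin)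

theorem theL_consistent {φ0 : Fml K G N} {Δ : List (Fml K G N)} (hc : ConsL φ0 Δ) :
    Consistent (theW Δ) (theL Δ) := by
  intro k n p hcert
  have hin : Fml.cert k (.bdto (.loc n) p) ∈ Δ := hcert
  have hkR : k ∈ LKeys Δ := mem_LKeys hin (by simp [fKeys])
  have hvp : PV Δ p := by
    refine ⟨fun a ha => mem_LKeys hin ?_, fun a ha => mem_LGlobs hin ?_,
      fun a ha => mem_LLocs hin ?_⟩
    · simp only [fKeys, pKeys, List.mem_cons, List.nil_append]
      exact Or.inr ha
    · simp only [fGlobs, pGlobs, List.nil_append]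
      exact ha
    · simp only [fLocs, pLocs, List.cons_append, List.mem_cons, List.nil_append]
      exact Or.inr ha
  have goodk : Good Δ k := Or.inr (Or.inl hkR)
  have hlink : Der Δ (.bdto ((PExp.key k).s (.loc n)) ((PExp.key k).s p)) :=
    der_mp (der_of_prv (PrvInf.keyLink k n p)) (der_mem hin)
  show interp (theW Δ) (theL Δ) p k ⊆ interp (theW Δ) (theL Δ) (.loc n) k
  rw [char hc p hvp k goodk, At_mem hkR]
  have hloc : interp (theW Δ) (theL Δ) (.loc n) k = Den Δ ((PExp.key k).s (.loc n)) := by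
    show theL Δ k n = _
    rw [theL, if_pos goodk, At_mem hkR]
  rw [hloc]
  exact Den_mono hlink

end Main
end LLNC

/-- Theorem 3.2, infinite case: if `K` is infinite, `AX_inf` is
sound and complete for LLNC with respect to the open semantics. -/
theorem axInf_sound_complete [Infinite K] (φ : Fml K G N) :
    PrvInf φ ↔ OValid φ := by
  constructor
  · intro h
    rintro ⟨w, l, k, hs, hcon⟩
    exact hs (LLNC.soundness h w l k hcon)
  · intro hval
    by_contra hnp
    have hc0 : LLNC.ConsL φ [Fml.not φ] := by
      intro hder
      have hder' : PrvInf ((Fml.not φ).imp (Fml.and φ (.not φ))) := hder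
      exact hnp (PrvInf.mp hder' (LLNC.taut_notbot_of φ φ))
    have hcons : LLNC.ConsL φ (LLNC.extendL φ [Fml.not φ] (LLNC.subsF φ)) :=
      LLNC.extendL_cons φ _ _ hc0
    set Δ := LLNC.extendL φ [Fml.not φ] (LLNC.subsF φ) with hΔ
    have hnotin : Fml.not φ ∈ Δ := LLNC.extendL_sub φ _ _ _ (by simp)
    have hdec : ∀ ψ ∈ LLNC.subsF φ, ψ ∈ Δ ∨ ψ.not ∈ Δ :=
      fun ψ h => LLNC.extendL_decides φ _ _ ψ h
    have ht := LLNC.truth hcons hdec φ (LLNC.self_mem_subsF φ)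
    have hns : ¬ Sat (LLNC.theW Δ) (LLNC.theL Δ) (LLNC.k0 Δ) φ := ht.2 hnotin
    exact hval ⟨LLNC.theW Δ, LLNC.theL Δ, LLNC.k0 Δ, hns, LLNC.theL_consistent hcons⟩
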